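/- Let X=(V,E,T) be a 2-dimensional (k0,k1)-regular (ε,μ)-cosystolic expander with |V| ≥ max{4/(1−2λ̃₂), 3/μ}, where λ̃₂ = λ̃₂(G₀(X)) < 1/2, and let ∅ ≠ F ⊊ E be a subset of edges. Then for every non-fat vertex v ∈ V (i.e., |F_v| ≤ k₀/2), the coboundary of its local view satisfies |δ(F_v)| ≥ ε·k₁·|F_v|. -/

import Mathlib

open Finset

/-- Symmetric-difference distance between two finite sets. -/
def sdist {α : Type} [DecidableEq α] (A B : Finset α) : ℕ :=
  (A \ B).card + (B \ A).card

/-- Distance from a finite set to a family of finite sets. -/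
noncomputable def famDist {α : Type} [DecidableEq α] (A : Finset α) (Z : Set (Finset α)) : ℕ :=
  sInf {d | ∃ z ∈ Z, sdist A z = d}

/-- `E` and `T` form the edges and triangles of a 2-dimensional simplicial complex on `V`. -/
def IsComplex {V : Type} [DecidableEq V] (E T : Finset (Finset V)) : Prop :=
  (∀ e ∈ E, e.card = 2) ∧ (∀ t ∈ T, t.card = 3) ∧
    ∀ t ∈ T, ∀ e, e ⊆ t → e.card = 2 → e ∈ E

/-- The complex is `(k₀, k₁)`-regular. -/
def IsRegularComplex {V : Type} [Fintype V] [DecidableEq V]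
    (E T : Finset (Finset V)) (k₀ k₁ : ℕ) : Prop :=
  (∀ v : V, (E.filter (fun e => v ∈ e)).card = k₀) ∧
    ∀ e ∈ E, (T.filter (fun t => e ⊆ t)).card = k₁

/-- Coboundary of a set of vertices: edges with exactly one endpoint in `S`. -/
def delta0 {V : Type} [DecidableEq V] (E : Finset (Finset V)) (S : Finset V) :
    Finset (Finset V) :=
  E.filter (fun e => (e ∩ S).card = 1)

/-- Coboundary of a set of edges: triangles containing an odd number of edges of `F`. -/
def delta1 {V : Type} [DecidableEq V] (T F : Finset (Finset V)) : Finset (Finset V) :=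
  T.filter (fun t => Odd ((F.filter (fun e => e ⊆ t)).card))

/-- Local view of a vertex `v` with regard to a set of edges `F`. -/
def localView {V : Type} [DecidableEq V] (F : Finset (Finset V)) (v : V) :
    Finset (Finset V) :=
  F.filter (fun e => v ∈ e)

/-- The 0-cocycles. -/
def Z0 {V : Type} [DecidableEq V] (E : Finset (Finset V)) : Set (Finset V) :=
  {S | delta0 E S = ∅}

/-- The 1-coboundaries: coboundaries of vertex sets (cuts). -/
def B1 {V : Type} [Fintype V] [DecidableEq V] (E : Finset (Finset V)) :
    Set (Finset (Finset V)) :=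
  {B | ∃ S : Finset V, B = delta0 E S}

/-- The 1-cocycles: sets of edges with empty coboundary. -/
def Z1 {V : Type} [DecidableEq V] (E T : Finset (Finset V)) : Set (Finset (Finset V)) :=
  {F | F ⊆ E ∧ delta1 T F = ∅}

/-- `(ε, μ)`-cosystolic expansion of a `(k₀, k₁)`-regular 2-dimensional complex. -/
def IsCosystolicExpander {V : Type} [Fintype V] [DecidableEq V]
    (E T : Finset (Finset V)) (k₀ k₁ : ℕ) (ε μ : ℝ) : Prop :=
  (∀ S : Finset V,
      (delta0 E S = ∅ →
        S = ∅ ∨ S = Finset.univ ∨ μ * (Fintype.card V : ℝ) ≤ (S.card : ℝ)) ∧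
      (delta0 E S ≠ ∅ →
        ε * (k₀ : ℝ) * (famDist S (Z0 E) : ℝ) ≤ ((delta0 E S).card : ℝ))) ∧
  (∀ F : Finset (Finset V), F ⊆ E →
      (delta1 T F = ∅ → F ∈ B1 E ∨ μ * (E.card : ℝ) ≤ (F.card : ℝ)) ∧
      (delta1 T F ≠ ∅ →
        ε * (k₁ : ℝ) * (famDist F (Z1 E T) : ℝ) ≤ ((delta1 T F).card : ℝ)))

/-- The underlying graph `G₀(X)` of the complex. -/
def G0 {V : Type} [DecidableEq V] (E : Finset (Finset V)) : SimpleGraph V where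
  Adj u v := u ≠ v ∧ ({u, v} : Finset V) ∈ E
  symm := ⟨fun u v h => ⟨h.1.symm, by rw [Finset.pair_comm]; exact h.2⟩⟩
  loopless := ⟨fun v h => h.1 rfl⟩

instance {V : Type} [DecidableEq V] (E : Finset (Finset V)) : DecidableRel (G0 E).Adj :=
  fun _ _ => inferInstanceAs (Decidable (_ ∧ _))

/-- The edge-graph `G₁(X)` of the complex: vertices are the edges of `X`, two edges
adjacent iff their union is a triangle. -/
def EdgeGraph {V : Type} [DecidableEq V] (E T : Finset (Finset V)) :
    SimpleGraph {e // e ∈ E} where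
  Adj e f := e ≠ f ∧ (e.val ∪ f.val) ∈ T
  symm := ⟨fun e f h => ⟨h.1.symm, by rw [Finset.union_comm]; exact h.2⟩⟩
  loopless := ⟨fun e h => h.1 rfl⟩

instance {V : Type} [DecidableEq V] (E T : Finset (Finset V)) :
    DecidableRel (EdgeGraph E T).Adj :=
  fun _ _ => inferInstanceAs (Decidable (_ ∧ _))

lemma adjMatrix_isHermitian {α : Type} [Fintype α] (G : SimpleGraph α)
    [DecidableRel G.Adj] : (SimpleGraph.adjMatrix ℝ G).IsHermitian := by
  refine Matrix.IsHermitian.ext fun i j => ?_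
  simp [SimpleGraph.adjMatrix_apply, SimpleGraph.adj_comm]

/-- The eigenvalues of the adjacency matrix of `G`, sorted in ascending order. -/
noncomputable def eigsAsc {α : Type} [Fintype α] [DecidableEq α] (G : SimpleGraph α)
    [DecidableRel G.Adj] : List ℝ :=
  Multiset.sort
    ((Finset.univ : Finset α).val.map (adjMatrix_isHermitian G).eigenvalues) (· ≤ ·)

/-- The normalized `i`-th largest adjacency eigenvalue (1-indexed) of a `k`-regular
graph `G`: `λ̃ᵢ = λᵢ / k`. -/
noncomputable def normEig {α : Type} [Fintype α] [DecidableEq α] (G : SimpleGraph α)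
    [DecidableRel G.Adj] (k i : ℕ) : ℝ :=
  (eigsAsc G).getD (Fintype.card α - i) 0 / (k : ℝ)

/-- The number of edges of `G` with exactly one endpoint in `S` (counted via the
ordered pairs `(u, v)` with `u ∈ S`, `v ∉ S`, `u ~ v`). -/
def cutEdges {α : Type} [Fintype α] [DecidableEq α] (G : SimpleGraph α)
    [DecidableRel G.Adj] (S : Finset α) : ℕ :=
  ((S ×ˢ Sᶜ).filter fun p => G.Adj p.1 p.2).card

/-- The normalized Cheeger constant of a `k`-regular graph. -/
noncomputable def normCheeger {α : Type} [Fintype α] [DecidableEq α] (G : SimpleGraph α)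
    [DecidableRel G.Adj] (k : ℕ) : ℝ :=
  sInf {x : ℝ | ∃ S : Finset α, 0 < S.card ∧ (S.card : ℝ) ≤ (Fintype.card α : ℝ) / 2 ∧
    x = (cutEdges G S : ℝ) / ((k : ℝ) * (S.card : ℝ))}

/-- The random walk on the `d`-regular graph `G` is `a`-rapidly mixing: from any initial
distribution, after `i` steps of the walk (with transition matrix `(1/d) • A(G)`),
the ℓ₂ distance to the uniform distribution is at most `a ^ i`. -/
def WalkRapidMixing {α : Type} [Fintype α] [DecidableEq α] (G : SimpleGraph α)
    [DecidableRel G.Adj] (d : ℕ) (a : ℝ) : Prop :=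
  ∀ p₀ : α → ℝ, (∀ x, 0 ≤ p₀ x) → (∑ x, p₀ x = 1) → ∀ i : ℕ,
    Real.sqrt (∑ x, ((((d : ℝ)⁻¹ • SimpleGraph.adjMatrix ℝ G) ^ i).mulVec p₀ x
      - (Fintype.card α : ℝ)⁻¹) ^ 2) ≤ a ^ i


/-! ### Auxiliary lemmas -/

section spec
open Matrix
variable {α : Type} [Fintype α] [DecidableEq α]
set_option linter.unusedSectionVars false

private noncomputable def toE (f : α → ℝ) : EuclideanSpace ℝ α := (WithLp.equiv 2 _).symm f

private lemma inner_toE_right (u : EuclideanSpace ℝ α) (f : α → ℝ) :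
    (inner ℝ u (toE f) : ℝ) = (⇑u : α → ℝ) ⬝ᵥ f := by
  simp [toE, PiLp.inner_apply, dotProduct, RCLike.inner_apply, conj_trivial, mul_comm]

variable (G : SimpleGraph α) [DecidableRel G.Adj]

private lemma rowsum (k : ℕ) (hreg : ∀ v, G.degree v = k) (u : α) :
    ∑ v, SimpleGraph.adjMatrix ℝ G u v = (k : ℝ) := by
  have : ∑ v, SimpleGraph.adjMatrix ℝ G u v
      = ∑ v ∈ G.neighborFinset u, (1 : ℝ) := by
    simp [SimpleGraph.neighborFinset_eq_filter, Finset.sum_filter]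
  rw [this, Finset.sum_const, nsmul_eq_mul, mul_one, ← SimpleGraph.degree, hreg]

private lemma eig_le_k (k : ℕ) (hreg : ∀ v, G.degree v = k) (i : α) :
    (adjMatrix_isHermitian G).eigenvalues i ≤ (k : ℝ) := by
  set hA := adjMatrix_isHermitian G
  have hev : Module.End.HasEigenvalue (Matrix.toLin' (SimpleGraph.adjMatrix ℝ G))
      (hA.eigenvalues i) := by
    apply Module.End.hasEigenvalue_of_hasEigenvector (x := ⇑(hA.eigenvectorBasis i))
    constructor
    · rw [Module.End.mem_eigenspace_iff, Matrix.toLin'_apply]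
      exact hA.mulVec_eigenvectorBasis i
    · intro h
      have h1 : ‖hA.eigenvectorBasis i‖ = 1 := hA.eigenvectorBasis.orthonormal.1 i
      have : (hA.eigenvectorBasis i) = 0 := by
        ext j; exact congrFun h j
      rw [this, norm_zero] at h1; norm_num at h1
  obtain ⟨j, hj⟩ := eigenvalue_mem_ball hev
  rw [Metric.mem_closedBall] at hj
  have hd : SimpleGraph.adjMatrix ℝ G j j = 0 := by simp
  have hsum : ∑ l ∈ Finset.univ.erase j, ‖SimpleGraph.adjMatrix ℝ G j l‖ ≤ (k : ℝ) := by
    rw [← rowsum G k hreg j]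
    refine le_trans (Finset.sum_le_sum_of_subset_of_nonneg (Finset.subset_univ _)
      (fun l _ _ => norm_nonneg _)) (le_of_eq ?_)
    refine Finset.sum_congr rfl fun l _ => ?_
    simp only [SimpleGraph.adjMatrix_apply]
    split <;> simp
  calc hA.eigenvalues i ≤ |hA.eigenvalues i| := le_abs_self _
    _ = dist (hA.eigenvalues i) (SimpleGraph.adjMatrix ℝ G j j) := by
        rw [hd, Real.dist_eq, sub_zero]
    _ ≤ _ := le_trans hj hsum

private lemma badcard (hn : 2 ≤ Fintype.card α) :
    (Finset.univ.filter fun i =>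
      (eigsAsc G).getD (Fintype.card α - 2) 0 < (adjMatrix_isHermitian G).eigenvalues i).card
      ≤ 1 := by
  classical
  set n := Fintype.card α with hn'
  set l := eigsAsc G with hl
  have hlen : l.length = n := by
    rw [hl, eigsAsc, Multiset.length_sort, Multiset.card_map, ← Finset.card_def, Finset.card_univ]
  have hsort : l.Pairwise (· ≤ ·) := Multiset.pairwise_sort ..
  have hlt : n - 2 < l.length := by omega
  set lam := l.getD (n - 2) 0 with hlam
  have hlam2 : lam = l[n-2] := List.getD_eq_getElem l 0 hlt
  have h1 : (Finset.univ.filter fun i =>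
      lam < (adjMatrix_isHermitian G).eigenvalues i).card
      = Multiset.countP (fun x => lam < x)
        ((Finset.univ : Finset α).val.map (adjMatrix_isHermitian G).eigenvalues) := by
    rw [Multiset.countP_map]; rfl
  have h2 : ((Finset.univ : Finset α).val.map (adjMatrix_isHermitian G).eigenvalues)
      = (l : Multiset ℝ) := by
    rw [hl, eigsAsc, Multiset.sort_eq]
  rw [h1, h2]
  have hsplit : l = l.take (n-1) ++ l.drop (n-1) := (List.take_append_drop _ _).symm
  have htake : ∀ a ∈ l.take (n-1), ¬ (lam < a) := by
    intro a ha
    obtain ⟨j, hj, rfl⟩ := List.mem_iff_getElem.mp ha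
    have hjlt : j < n - 1 := by
      have := hj; rw [List.length_take, hlen] at this; omega
    rw [List.getElem_take]
    rcases lt_or_eq_of_le (by omega : j ≤ n - 2) with h | h
    · have := (List.pairwise_iff_getElem.mp hsort) j (n-2) (by omega) (by omega) h
      rw [hlam2]; exact not_lt.mpr this
    · subst h; rw [hlam2]; exact lt_irrefl _
  calc Multiset.countP (fun x => lam < x) (l : Multiset ℝ)
      = Multiset.countP (fun x => lam < x)
        ((l.take (n-1) : Multiset ℝ) + (l.drop (n-1) : Multiset ℝ)) := by
        rw [Multiset.coe_add]; exact congrArg _ (congrArg _ hsplit)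
    _ = Multiset.countP (fun x => lam < x) (l.take (n-1) : Multiset ℝ)
        + Multiset.countP (fun x => lam < x) (l.drop (n-1) : Multiset ℝ) :=
        Multiset.countP_add _ _ _
    _ ≤ 0 + 1 := by
        gcongr
        · exact le_of_eq (Multiset.countP_eq_zero.mpr (by simpa using htake))
        · refine le_trans (Multiset.countP_le_card _ _) ?_
          simp only [Multiset.coe_card, List.length_drop, hlen]
          omega
    _ = 1 := by norm_num

private lemma repr_toE_mulVec (f : α → ℝ) (i : α) :
    (adjMatrix_isHermitian G).eigenvectorBasis.repr (toE (SimpleGraph.adjMatrix ℝ G *ᵥ f)) i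
      = (adjMatrix_isHermitian G).eigenvalues i
        * (adjMatrix_isHermitian G).eigenvectorBasis.repr (toE f) i := by
  set hA := adjMatrix_isHermitian G
  set b := hA.eigenvectorBasis
  rw [OrthonormalBasis.repr_apply_apply, OrthonormalBasis.repr_apply_apply,
    inner_toE_right, inner_toE_right]
  have hb : SimpleGraph.adjMatrix ℝ G *ᵥ ⇑(b i) = hA.eigenvalues i • ⇑(b i) :=
    hA.mulVec_eigenvectorBasis i
  rw [Matrix.dotProduct_mulVec, ← Matrix.mulVec_transpose, SimpleGraph.transpose_adjMatrix,
    hb, smul_dotProduct, smul_eq_mul]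

private lemma dot_eq_sum_repr (f g : α → ℝ) :
    f ⬝ᵥ g = ∑ i, (adjMatrix_isHermitian G).eigenvectorBasis.repr (toE f) i
      * (adjMatrix_isHermitian G).eigenvectorBasis.repr (toE g) i := by
  set b := (adjMatrix_isHermitian G).eigenvectorBasis
  have h1 : (inner ℝ (toE f) (toE g) : ℝ) = f ⬝ᵥ g := inner_toE_right _ _
  rw [← h1, ← b.repr.inner_map_map (toE f) (toE g), PiLp.inner_apply]
  simp only [RCLike.inner_apply, conj_trivial]
  exact Finset.sum_congr rfl fun _ _ => mul_comm _ _

private lemma const_one_mulVec (k : ℕ) (hreg : ∀ v, G.degree v = k) :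
    SimpleGraph.adjMatrix ℝ G *ᵥ (fun _ => (1:ℝ)) = fun _ => (k:ℝ) := by
  funext u
  simp [SimpleGraph.adjMatrix_mulVec_apply, hreg u]

private lemma rayleigh_bound (k : ℕ) (hreg : ∀ v, G.degree v = k) (hn : 2 ≤ Fintype.card α)
    (x : α → ℝ) (hx : ∑ v, x v = 0) :
    x ⬝ᵥ (SimpleGraph.adjMatrix ℝ G *ᵥ x)
      ≤ (eigsAsc G).getD (Fintype.card α - 2) 0 * (x ⬝ᵥ x) := by
  classical
  set hA := adjMatrix_isHermitian G
  set b := hA.eigenvectorBasis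
  set lam := (eigsAsc G).getD (Fintype.card α - 2) 0 with hlamdef
  set c : α → ℝ := fun i => b.repr (toE x) i with hc
  set d : α → ℝ := fun i => b.repr (toE (fun _ => (1:ℝ))) i with hd
  have hxA : x ⬝ᵥ (SimpleGraph.adjMatrix ℝ G *ᵥ x) = ∑ i, hA.eigenvalues i * c i ^ 2 := by
    rw [dot_eq_sum_repr G]
    refine Finset.sum_congr rfl fun i _ => ?_
    rw [repr_toE_mulVec]
    ring
  have hxx : x ⬝ᵥ x = ∑ i, c i ^ 2 := by
    rw [dot_eq_sum_repr G]
    exact Finset.sum_congr rfl fun i _ => (sq (c i)).symm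
  have hdk : ∀ i, d i ≠ 0 → hA.eigenvalues i = (k : ℝ) := by
    intro i hi
    have h1 : b.repr (toE (SimpleGraph.adjMatrix ℝ G *ᵥ (fun _ => (1:ℝ)))) i
        = hA.eigenvalues i * d i := repr_toE_mulVec G _ i
    rw [const_one_mulVec G k hreg] at h1
    have h2 : (fun (_ : α) => (k:ℝ)) = (k:ℝ) • (fun _ => (1:ℝ)) := by
      funext u; simp
    rw [h2] at h1
    have h3 : toE ((k:ℝ) • (fun (_:α) => (1:ℝ))) = (k:ℝ) • toE (fun _ => (1:ℝ)) := rfl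
    rw [h3, _root_.map_smul] at h1
    have h4 : (k : ℝ) * d i = hA.eigenvalues i * d i := h1
    exact (mul_right_cancel₀ hi h4).symm
  have hdc : ∑ i, d i * c i = 0 := by
    have : (fun _ => (1:ℝ)) ⬝ᵥ x = ∑ i, d i * c i := dot_eq_sum_repr G _ _
    rw [← this, dotProduct]
    simpa using hx
  have hne : ∃ i, d i ≠ 0 := by
    by_contra h
    push_neg at h
    have : toE (fun (_:α) => (1:ℝ)) = 0 := by
      have : b.repr (toE (fun (_:α) => (1:ℝ))) = 0 := by
        ext i; exact h i
      exact b.repr.map_eq_zero_iff.mp this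
    have h0 : Nonempty α := Fintype.card_pos_iff.mp (by omega)
    obtain ⟨v⟩ := h0
    have h1 : (1:ℝ) = 0 := congrFun (congrArg (fun (z : EuclideanSpace ℝ α) => (z : α → ℝ)) this) v
    exact one_ne_zero h1
  obtain ⟨istar, histar⟩ := hne
  have heigstar : hA.eigenvalues istar = (k : ℝ) := hdk istar histar
  have hbad := badcard G hn
  have hcbad : ∀ i, lam < hA.eigenvalues i → c i = 0 := by
    intro i hi
    have histar_bad : istar ∈ Finset.univ.filter
        (fun j => lam < hA.eigenvalues j) := by
      simp only [Finset.mem_filter, Finset.mem_univ, true_and]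
      rw [heigstar]
      exact lt_of_lt_of_le hi (eig_le_k G k hreg i)
    have hi_bad : i ∈ Finset.univ.filter (fun j => lam < hA.eigenvalues j) := by
      simp only [Finset.mem_filter, Finset.mem_univ, true_and]; exact hi
    have hii : i = istar := Finset.card_le_one.mp hbad _ hi_bad _ histar_bad
    have hdj : ∀ j, j ≠ istar → d j = 0 := by
      intro j hj
      by_contra hdj0
      have : hA.eigenvalues j = (k:ℝ) := hdk j hdj0
      have hj_bad : j ∈ Finset.univ.filter (fun j => lam < hA.eigenvalues j) := by
        simp only [Finset.mem_filter, Finset.mem_univ, true_and]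
        rw [this, ← heigstar, ← hii]
        exact hi
      exact hj (Finset.card_le_one.mp hbad _ hj_bad _ histar_bad)
    have : ∑ j, d j * c j = d istar * c istar := by
      refine Finset.sum_eq_single istar (fun j _ hj => by rw [hdj j hj, zero_mul]) ?_
      intro h; exact absurd (Finset.mem_univ istar) h
    rw [this] at hdc
    rcases mul_eq_zero.mp hdc with h | h
    · exact absurd h histar
    · rw [hii]; exact h
  rw [hxA, hxx, Finset.mul_sum]
  refine Finset.sum_le_sum fun i _ => ?_
  by_cases h : hA.eigenvalues i ≤ lam
  · exact mul_le_mul_of_nonneg_right h (sq_nonneg _)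
  · push_neg at h
    rw [hcbad i h]
    norm_num

private lemma mixing (k : ℕ) (hreg : ∀ v, G.degree v = k) (hn : 2 ≤ Fintype.card α)
    (S : Finset α) :
    ((k : ℝ) - (eigsAsc G).getD (Fintype.card α - 2) 0) * S.card
        * ((Fintype.card α : ℝ) - S.card) / (Fintype.card α : ℝ)
      ≤ ∑ u ∈ S, ∑ v ∈ Sᶜ, SimpleGraph.adjMatrix ℝ G u v := by
  classical
  set A := SimpleGraph.adjMatrix ℝ G with hA
  set lam := (eigsAsc G).getD (Fintype.card α - 2) 0 with hlam
  set nR : ℝ := (Fintype.card α : ℝ) with hnR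
  set sR : ℝ := (S.card : ℝ) with hsR
  have hn0 : (0:ℝ) < nR := by
    rw [hnR]; exact_mod_cast lt_of_lt_of_le (by norm_num) hn
  set c : ℝ := sR / nR with hc
  set oneS : α → ℝ := fun v => if v ∈ S then 1 else 0 with honeS
  set x : α → ℝ := fun v => oneS v - c with hxdef
  have hsum_oneS : ∑ v, oneS v = sR := by
    simp [honeS, Finset.sum_boole, hsR, Finset.filter_mem_eq_inter]
  have hx : ∑ v, x v = 0 := by
    rw [hxdef]
    rw [Finset.sum_sub_distrib, hsum_oneS, Finset.sum_const, Finset.card_univ, nsmul_eq_mul]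
    rw [hc]
    field_simp
    simp [hnR]
  have hrow : ∀ u, ∑ v, A u v = (k:ℝ) := rowsum G k hreg
  have hsymA : ∀ u v, A u v = A v u := by
    intro u v; simp [hA, SimpleGraph.adjMatrix_apply, SimpleGraph.adj_comm]
  have hcol : ∀ v, ∑ u, A u v = (k:ℝ) := by
    intro v
    rw [show (∑ u, A u v) = ∑ u, A v u from Finset.sum_congr rfl fun u _ => hsymA u v]
    exact hrow v
  set P : ℝ := ∑ u ∈ S, ∑ v ∈ S, A u v with hP
  set C : ℝ := ∑ u ∈ S, ∑ v ∈ Sᶜ, A u v with hC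
  have hPC : P + C = (k:ℝ) * sR := by
    rw [hP, hC, ← Finset.sum_add_distrib]
    have : ∀ u ∈ S, (∑ v ∈ S, A u v) + (∑ v ∈ Sᶜ, A u v) = (k:ℝ) := by
      intro u _
      rw [Finset.sum_add_sum_compl]
      exact hrow u
    rw [Finset.sum_congr rfl this, Finset.sum_const, nsmul_eq_mul, hsR, mul_comm]
  have hind : ∀ (f : α → ℝ), ∑ v, f v * oneS v = ∑ v ∈ S, f v := by
    intro f
    simp [honeS, mul_ite, Finset.sum_ite_mem]
  have hAx : ∀ u, (A *ᵥ x) u = (∑ v ∈ S, A u v) - c * k := by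
    intro u
    have : (A *ᵥ x) u = ∑ v, A u v * x v := rfl
    rw [this, hxdef]
    simp only [mul_sub]
    rw [Finset.sum_sub_distrib, hind (A u), ← Finset.sum_mul, hrow u, mul_comm]
  have hColS : ∑ u, ∑ v ∈ S, A u v = (k:ℝ) * sR := by
    refine Finset.sum_comm.trans ?_
    have : ∀ v ∈ S, ∑ u, A u v = (k:ℝ) := fun v _ => hcol v
    rw [Finset.sum_congr rfl this, Finset.sum_const, nsmul_eq_mul, hsR, mul_comm]
  have hxAx : x ⬝ᵥ (A *ᵥ x) = P - 2 * c * k * sR + nR * (c * (c * k)) := by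
    have h0 : x ⬝ᵥ (A *ᵥ x) = ∑ u, x u * ((∑ v ∈ S, A u v) - c * k) := by
      refine Finset.sum_congr rfl fun u _ => ?_
      rw [hAx u]
    rw [h0, hxdef]
    simp only [sub_mul, mul_sub]
    rw [Finset.sum_sub_distrib, Finset.sum_sub_distrib, Finset.sum_sub_distrib]
    have e1 : ∑ u, oneS u * ∑ v ∈ S, A u v = P := by
      have := hind (fun u => ∑ v ∈ S, A u v)
      rw [hP, ← this]
      exact Finset.sum_congr rfl fun u _ => mul_comm _ _
    have e2 : ∑ u, oneS u * (c * k) = sR * (c * k) := by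
      rw [← Finset.sum_mul, hsum_oneS]
    have e3 : ∑ u, c * ∑ v ∈ S, A u v = c * ((k:ℝ) * sR) := by
      rw [← Finset.mul_sum, hColS]
    have e4 : ∑ (_ : α), c * (c * (k:ℝ)) = nR * (c * (c * k)) := by
      rw [Finset.sum_const, Finset.card_univ, nsmul_eq_mul, hnR]
    rw [e1, e2, e3, e4]
    ring
  have hxx : x ⬝ᵥ x = sR - 2 * c * sR + nR * c ^ 2 := by
    have h0 : x ⬝ᵥ x = ∑ v, (oneS v - c) * (oneS v - c) := rfl
    rw [h0]
    simp only [sub_mul, mul_sub]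
    rw [Finset.sum_sub_distrib, Finset.sum_sub_distrib, Finset.sum_sub_distrib]
    have e1 : ∑ v, oneS v * oneS v = sR := by
      rw [hind oneS, honeS]
      simp [hsR]
    have e2 : ∑ v, oneS v * c = sR * c := by rw [← Finset.sum_mul, hsum_oneS]
    have e3 : ∑ v, c * oneS v = c * sR := by
      rw [← Finset.mul_sum, hsum_oneS]
    have e4 : ∑ (_ : α), c * c = nR * c ^ 2 := by
      rw [Finset.sum_const, Finset.card_univ, nsmul_eq_mul, hnR]; ring
    rw [e1, e2, e3, e4]
    ring
  have key := rayleigh_bound G k hreg hn x hx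
  rw [hxAx, hxx, ← hlam] at key
  have hPle : P ≤ lam * (sR - 2*c*sR + nR * c^2) + 2*c*k*sR - nR * (c * (c*k)) := by
    linarith
  have hCge : (k:ℝ) * sR - P ≤ C := by linarith
  have hcs : c * nR = sR := by rw [hc]; field_simp
  refine le_trans ?_ hCge
  have expand : ((k:ℝ) - lam) * sR * (nR - sR) / nR = ((k:ℝ) - lam) * (sR - c * sR) := by
    rw [hc]; field_simp
  rw [expand]
  have h1 : nR * c ^ 2 = c * sR := by
    have : nR * c ^ 2 = c * (c * nR) := by ring
    rw [this, hcs]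
  have h2 : nR * (c * (c * (k:ℝ))) = (k:ℝ) * (c * sR) := by
    have : nR * (c * (c * (k:ℝ))) = (k:ℝ) * (c * (c * nR)) := by ring
    rw [this, hcs]
  have hPle2 : P ≤ lam * sR - lam * (c * sR) + (k:ℝ) * (c * sR) :=
    hPle.trans (le_of_eq (by rw [h1, h2]; ring))
  linarith

end spec

section comb
variable {V : Type} [Fintype V] [DecidableEq V] (E : Finset (Finset V))
set_option linter.unusedSectionVars false

private lemma degree_G0 (k₀ : ℕ) (hE2 : ∀ e ∈ E, e.card = 2)
    (hreg0 : ∀ v : V, (E.filter (fun e => v ∈ e)).card = k₀) (v : V) :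
    (G0 E).degree v = k₀ := by
  rw [← hreg0 v, ← SimpleGraph.card_neighborFinset_eq_degree]
  refine Finset.card_bij (fun u _ => ({v, u} : Finset V)) ?_ ?_ ?_
  · intro u hu
    rw [SimpleGraph.mem_neighborFinset] at hu
    simp only [Finset.mem_filter]
    exact ⟨hu.2, Finset.mem_insert_self v {u}⟩
  · intro a ha b hb hab
    rw [SimpleGraph.mem_neighborFinset] at ha hb
    have hab' : ({v, a} : Finset V) = {v, b} := hab
    have : a ∈ ({v, b} : Finset V) := hab' ▸ Finset.mem_insert_of_mem (Finset.mem_singleton_self a)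
    rcases Finset.mem_insert.mp this with h | h
    · exact absurd h.symm ha.1
    · exact Finset.mem_singleton.mp h
  · intro e he
    rw [Finset.mem_filter] at he
    obtain ⟨a, b, hab, rfl⟩ := Finset.card_eq_two.mp (hE2 e he.1)
    rcases Finset.mem_insert.mp he.2 with h | h
    · subst h
      refine ⟨b, ?_, rfl⟩
      rw [SimpleGraph.mem_neighborFinset]
      exact ⟨hab, he.1⟩
    · rw [Finset.mem_singleton] at h
      subst h
      refine ⟨a, ?_, Finset.pair_comm v a⟩
      rw [SimpleGraph.mem_neighborFinset]
      refine ⟨hab.symm, ?_⟩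
      rw [Finset.pair_comm]
      exact he.1

open Matrix in
private lemma cut_eq (hE2 : ∀ e ∈ E, e.card = 2) (S : Finset V) :
    ∑ u ∈ S, ∑ v ∈ Sᶜ, SimpleGraph.adjMatrix ℝ (G0 E) u v = ((delta0 E S).card : ℝ) := by
  have h1 : ∑ u ∈ S, ∑ v ∈ Sᶜ, SimpleGraph.adjMatrix ℝ (G0 E) u v
      = ∑ p ∈ S ×ˢ Sᶜ, (if (G0 E).Adj p.1 p.2 then (1:ℝ) else 0) := by
    rw [Finset.sum_product]
    simp [SimpleGraph.adjMatrix_apply]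
  rw [h1, Finset.sum_boole]
  congr 1
  refine Finset.card_bij (fun p _ => ({p.1, p.2} : Finset V)) ?_ ?_ ?_
  · rintro ⟨u, v⟩ hp
    simp only [Finset.mem_filter, Finset.mem_product, Finset.mem_compl] at hp
    obtain ⟨⟨huS, hvS⟩, hne, hE⟩ := hp
    rw [delta0, Finset.mem_filter]
    refine ⟨hE, ?_⟩
    have : ({u, v} : Finset V) ∩ S = {u} := by
      ext w
      simp only [Finset.mem_inter, Finset.mem_insert, Finset.mem_singleton]
      constructor
      · rintro ⟨h | h, hw⟩
        · exact h
        · subst h; exact absurd hw hvS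
      · rintro rfl; exact ⟨Or.inl rfl, huS⟩
    rw [this, Finset.card_singleton]
  · rintro ⟨u, v⟩ hp ⟨u', v'⟩ hp' huv
    simp only [Finset.mem_filter, Finset.mem_product, Finset.mem_compl] at hp hp'
    obtain ⟨⟨huS, hvS⟩, -, -⟩ := hp
    obtain ⟨⟨huS', hvS'⟩, -, -⟩ := hp'
    have huv2 : ({u, v} : Finset V) = {u', v'} := huv
    have hu : u = u' := by
      have : u ∈ ({u', v'} : Finset V) := huv2 ▸ Finset.mem_insert_self u {v}
      rcases Finset.mem_insert.mp this with h | h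
      · exact h
      · rw [Finset.mem_singleton] at h; subst h; exact absurd huS hvS'
    have hv : v = v' := by
      have : v ∈ ({u', v'} : Finset V) :=
        huv2 ▸ Finset.mem_insert_of_mem (Finset.mem_singleton_self v)
      rcases Finset.mem_insert.mp this with h | h
      · subst h; exact absurd huS' hvS
      · exact Finset.mem_singleton.mp h
    rw [Prod.mk.injEq]; exact ⟨hu, hv⟩
  · intro e he
    rw [delta0, Finset.mem_filter] at he
    obtain ⟨heE, hecard⟩ := he
    obtain ⟨u, hu⟩ := Finset.card_eq_one.mp hecard
    have huS : u ∈ e ∩ S := hu ▸ Finset.mem_singleton_self u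
    rw [Finset.mem_inter] at huS
    obtain ⟨a, b, hab, habe⟩ := Finset.card_eq_two.mp (hE2 e heE)
    subst habe
    rcases Finset.mem_insert.mp huS.1 with h | h
    · subst h
      have hbS : b ∉ S := by
        intro hbS
        have : b ∈ ({u} : Finset V) := hu ▸ Finset.mem_inter.mpr
          ⟨Finset.mem_insert_of_mem (Finset.mem_singleton_self b), hbS⟩
        exact hab (Finset.mem_singleton.mp this).symm
      refine ⟨(u, b), ?_, rfl⟩
      simp only [Finset.mem_filter, Finset.mem_product, Finset.mem_compl]
      exact ⟨⟨huS.2, hbS⟩, hab, heE⟩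
    · rw [Finset.mem_singleton] at h
      subst h
      have haS : a ∉ S := by
        intro haS
        have : a ∈ ({u} : Finset V) := hu ▸ Finset.mem_inter.mpr
          ⟨Finset.mem_insert_self a _, haS⟩
        exact hab (Finset.mem_singleton.mp this)
      refine ⟨(u, a), ?_, Finset.pair_comm u a⟩
      simp only [Finset.mem_filter, Finset.mem_product, Finset.mem_compl]
      exact ⟨⟨huS.2, haS⟩, hab.symm, by rwa [Finset.pair_comm]⟩

private lemma delta0_singleton (v : V) : delta0 E {v} = E.filter (fun e => v ∈ e) := by
  unfold delta0
  refine Finset.filter_congr fun e _ => ?_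
  constructor
  · intro h
    obtain ⟨u, hu⟩ := Finset.card_eq_one.mp h
    have : u ∈ e ∩ {v} := hu ▸ Finset.mem_singleton_self u
    rw [Finset.mem_inter, Finset.mem_singleton] at this
    rw [← this.2]; exact this.1
  · intro h
    have : e ∩ {v} = {v} := by
      ext w
      simp only [Finset.mem_inter, Finset.mem_singleton]
      constructor
      · exact fun hw => hw.2
      · rintro rfl; exact ⟨h, rfl⟩
    rw [this, Finset.card_singleton]

private lemma delta0_compl (hE2 : ∀ e ∈ E, e.card = 2) (S : Finset V) :
    delta0 E Sᶜ = delta0 E S := by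
  unfold delta0
  refine Finset.filter_congr fun e he => ?_
  have hsplit : (e ∩ S).card + (e ∩ Sᶜ).card = 2 := by
    rw [← hE2 e he]
    rw [← Finset.card_union_of_disjoint]
    · congr 1
      rw [← Finset.inter_union_distrib_left, Finset.union_compl, Finset.inter_univ]
    · exact Finset.disjoint_of_subset_left (Finset.inter_subset_right)
        (Finset.disjoint_of_subset_right (Finset.inter_subset_right) disjoint_compl_right)
  omega

private lemma handshake (k₀ : ℕ) (hE2 : ∀ e ∈ E, e.card = 2)
    (hreg0 : ∀ v : V, (E.filter (fun e => v ∈ e)).card = k₀) :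
    Fintype.card V * k₀ = 2 * E.card := by
  have h1 : ∑ v : V, (E.filter (fun e => v ∈ e)).card = Fintype.card V * k₀ := by
    rw [Finset.sum_congr rfl fun v _ => hreg0 v, Finset.sum_const, Finset.card_univ, smul_eq_mul]
  have h2 : ∑ v : V, (E.filter (fun e => v ∈ e)).card = ∑ e ∈ E, e.card := by
    simp only [Finset.card_filter]
    rw [Finset.sum_comm]
    refine Finset.sum_congr rfl fun e _ => ?_
    rw [Finset.sum_ite_mem, Finset.univ_inter]
    exact (Finset.card_eq_sum_ones e).symm
  have h3 : ∑ e ∈ E, e.card = 2 * E.card := by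
    rw [Finset.sum_congr rfl hE2, Finset.sum_const, smul_eq_mul, mul_comm]
  omega

private lemma delta0_empty : delta0 E (∅ : Finset V) = ∅ := by
  unfold delta0
  refine Finset.filter_false_of_mem fun e _ => ?_
  rw [Finset.inter_empty, Finset.card_empty]
  norm_num

private lemma delta0_univ (hE2 : ∀ e ∈ E, e.card = 2) :
    delta0 E (Finset.univ : Finset V) = ∅ := by
  unfold delta0
  refine Finset.filter_false_of_mem fun e he => ?_
  rw [Finset.inter_univ, hE2 e he]
  norm_num

/-- A nonempty proper cut has at least `k₀` edges. -/
private lemma cut_ge_k (k₀ : ℕ) (hE2 : ∀ e ∈ E, e.card = 2)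
    (hreg0 : ∀ v : V, (E.filter (fun e => v ∈ e)).card = k₀) (hk0 : 0 < k₀)
    (hV4 : 4 / (1 - 2 * normEig (G0 E) k₀ 2) ≤ (Fintype.card V : ℝ))
    (hlam : normEig (G0 E) k₀ 2 < 1 / 2)
    (S : Finset V) (hS0 : S.Nonempty) (hSu : S ≠ Finset.univ) :
    (k₀ : ℝ) ≤ ((delta0 E S).card : ℝ) := by
  classical
  set n := Fintype.card V with hn
  have hs1 : 1 ≤ S.card := Finset.card_pos.mpr hS0
  have hsn : S.card < n := by
    rw [hn, ← Finset.card_univ]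
    exact Finset.card_lt_card (Finset.ssubset_univ_iff.mpr hSu)
  have hn2 : 2 ≤ n := by omega
  rcases (by omega : S.card = 1 ∨ S.card = n - 1 ∨ (2 ≤ S.card ∧ S.card + 2 ≤ n)) with h | h | h
  · obtain ⟨v, rfl⟩ := Finset.card_eq_one.mp h
    rw [delta0_singleton, hreg0 v]
  · have hcc : Sᶜ.card = 1 := by
      rw [Finset.card_compl]
      omega
    obtain ⟨v, hv⟩ := Finset.card_eq_one.mp hcc
    rw [← delta0_compl E hE2 S, hv, delta0_singleton, hreg0 v]
  · -- spectral case
    have hdeg : ∀ v, (G0 E).degree v = k₀ := degree_G0 E k₀ hE2 hreg0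
    have hmix := mixing (G0 E) k₀ hdeg hn2 S
    rw [cut_eq E hE2 S] at hmix
    refine le_trans ?_ hmix
    set t := normEig (G0 E) k₀ 2 with ht
    have hk0R : (0:ℝ) < (k₀:ℝ) := by exact_mod_cast hk0
    have hlamval : (eigsAsc (G0 E)).getD (Fintype.card V - 2) 0 = t * k₀ := by
      rw [ht, normEig]
      field_simp
    rw [hlamval]
    set nR : ℝ := (n : ℝ) with hnR
    set sR : ℝ := (S.card : ℝ) with hsRdef
    have hu0 : (0:ℝ) < 1 - 2 * t := by linarith
    have hnu : 4 ≤ nR * (1 - 2 * t) := by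
      rw [div_le_iff₀ hu0] at hV4
      rw [hnR, hn]
      linarith [hV4]
    have hss2 : (2:ℝ) ≤ sR := by rw [hsRdef]; exact_mod_cast h.1
    have hsn2 : sR + 2 ≤ nR := by
      rw [hsRdef, hnR]; exact_mod_cast h.2
    have hn4 : (4:ℝ) ≤ nR := by linarith
    have hn0 : (0:ℝ) < nR := by linarith
    rw [le_div_iff₀ hn0]
    set u : ℝ := 1 - 2 * t with hudef
    have h1t : (1:ℝ) - t = (1 + u) / 2 := by rw [hudef]; ring
    have ha2 : 0 ≤ u * (nR - 4) := mul_nonneg (le_of_lt hu0) (by linarith)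
    have h6 : 2 ≤ u * (nR - 2) := by nlinarith [hnu, ha2]
    have h7 : nR ≤ (nR - 2) * (1 + u) := by nlinarith [h6]
    have hw : 2 * nR - 4 ≤ sR * (nR - sR) := by nlinarith [mul_nonneg (by linarith : (0:ℝ) ≤ sR - 2) (by linarith : (0:ℝ) ≤ nR - sR - 2)]
    have h8 : nR ≤ (1 - t) * (sR * (nR - sR)) := by
      rw [h1t]
      have hup : (0:ℝ) ≤ (1 + u) / 2 := by linarith
      calc nR ≤ (nR - 2) * (1 + u) := h7
        _ = (1 + u) / 2 * (2 * nR - 4) := by ring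
        _ ≤ (1 + u) / 2 * (sR * (nR - sR)) := by
            exact mul_le_mul_of_nonneg_left hw hup
    calc (k₀:ℝ) * nR ≤ (k₀:ℝ) * ((1 - t) * (sR * (nR - sR))) :=
          mul_le_mul_of_nonneg_left h8 (le_of_lt hk0R)
      _ = ((k₀:ℝ) - t * k₀) * sR * (nR - sR) := by ring

private lemma delta1_empty (T : Finset (Finset V)) : delta1 T (∅ : Finset (Finset V)) = ∅ := by
  unfold delta1
  refine Finset.filter_false_of_mem fun t _ => ?_
  rw [Finset.filter_empty, Finset.card_empty]
  exact (Nat.odd_iff.not.mpr (by norm_num))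

private lemma sdist_empty (A : Finset (Finset V)) : sdist A (∅ : Finset (Finset V)) = A.card := by
  unfold sdist
  rw [Finset.sdiff_empty, Finset.empty_sdiff, Finset.card_empty, Nat.add_zero]

end comb

theorem coboundary_of_local_view_of_nonfat_vertex
    {V : Type} [Fintype V] [DecidableEq V] (E T : Finset (Finset V))
    (k₀ k₁ : ℕ) (ε μ : ℝ) (hε : 0 < ε) (hμ : 0 < μ)
    (hX : IsComplex E T) (hreg : IsRegularComplex E T k₀ k₁)
    (hexp : IsCosystolicExpander E T k₀ k₁ ε μ)
    (hV : max (4 / (1 - 2 * normEig (G0 E) k₀ 2)) (3 / μ) ≤ (Fintype.card V : ℝ))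
    (hlam : normEig (G0 E) k₀ 2 < 1 / 2)
    (F : Finset (Finset V)) (hF : F ⊆ E) (hF0 : F ≠ ∅) (hFE : F ≠ E) (v : V)
    (hnonfat : ((localView F v).card : ℝ) ≤ (k₀ : ℝ) / 2) :
    ε * (k₁ : ℝ) * ((localView F v).card : ℝ) ≤ ((delta1 T (localView F v)).card : ℝ) := by
  classical
  set Fv := localView F v with hFvdef
  have hE2 : ∀ e ∈ E, e.card = 2 := hX.1
  by_cases hFv0 : Fv = ∅
  · rw [hFv0]
    simp only [Finset.card_empty, Nat.cast_zero, mul_zero]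
    positivity
  · have hFvF : Fv ⊆ F := Finset.filter_subset _ _
    have hFvE : Fv ⊆ E := hFvF.trans hF
    have hcard1 : 1 ≤ Fv.card := Finset.card_pos.mpr (Finset.nonempty_of_ne_empty hFv0)
    have hcard1R : (1:ℝ) ≤ (Fv.card : ℝ) := by exact_mod_cast hcard1
    have hk2 : 2 * (Fv.card : ℝ) ≤ (k₀ : ℝ) := by linarith [hnonfat]
    have hk0 : 0 < k₀ := by
      have : (0:ℝ) < (k₀:ℝ) := by linarith
      exact_mod_cast this
    set n := Fintype.card V with hn
    have hV4 : 4 / (1 - 2 * normEig (G0 E) k₀ 2) ≤ (n : ℝ) :=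
      le_trans (le_max_left _ _) hV
    have hVmu : 3 / μ ≤ (n : ℝ) := le_trans (le_max_right _ _) hV
    have hmun : (3:ℝ) ≤ μ * n := by
      rw [div_le_iff₀ hμ] at hVmu
      linarith
    have hhs : n * k₀ = 2 * E.card := handshake E k₀ hE2 hreg.1
    have hEcard : (E.card : ℝ) = (n : ℝ) * k₀ / 2 := by
      have : ((n * k₀ : ℕ) : ℝ) = ((2 * E.card : ℕ) : ℝ) := by rw [hhs]
      push_cast at this
      linarith
    have hmuE : 3 * (k₀:ℝ) / 2 ≤ μ * E.card := by
      rw [hEcard]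
      have hk0R : (0:ℝ) ≤ (k₀:ℝ) := by positivity
      nlinarith [hmun, hk0R]
    have hcut : ∀ S : Finset V, delta0 E S ≠ ∅ → (k₀ : ℝ) ≤ ((delta0 E S).card : ℝ) := by
      intro S hSne
      have hS0 : S.Nonempty := by
        rcases Finset.eq_empty_or_nonempty S with rfl | h
        · exact absurd (delta0_empty E) hSne
        · exact h
      have hSu : S ≠ Finset.univ := by
        rintro rfl
        exact hSne (delta0_univ E hE2)
      exact cut_ge_k E k₀ hE2 hreg.1 hk0 hV4 hlam S hS0 hSu
    have key : ∀ z ∈ Z1 E T, (Fv.card : ℝ) ≤ (sdist Fv z : ℝ) := by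
      intro z hz
      obtain ⟨hzE, hz1⟩ := hz
      have hd : (z.card : ℝ) - (Fv.card : ℝ) ≤ (sdist Fv z : ℝ) := by
        have h1 : z.card ≤ (z \ Fv).card + Fv.card := Finset.card_le_card_sdiff_add_card
        have h2 : (z \ Fv).card ≤ sdist Fv z := by
          unfold sdist
          omega
        have h1R : (z.card : ℝ) ≤ ((z \ Fv).card : ℝ) + (Fv.card : ℝ) := by exact_mod_cast h1
        have h2R : ((z \ Fv).card : ℝ) ≤ (sdist Fv z : ℝ) := by exact_mod_cast h2
        linarith
      rcases ((hexp.2 z hzE).1 hz1) with hB | hbig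
      · obtain ⟨S, rfl⟩ := hB
        by_cases hS0 : delta0 E S = ∅
        · rw [hS0, sdist_empty]
        · have := hcut S hS0
          linarith
      · linarith
    have hZ1ne : {d | ∃ z ∈ Z1 E T, sdist Fv z = d}.Nonempty := by
      refine ⟨sdist Fv ∅, ∅, ⟨Finset.empty_subset _, delta1_empty T⟩, rfl⟩
    have hfam : (Fv.card : ℝ) ≤ (famDist Fv (Z1 E T) : ℝ) := by
      have : Fv.card ≤ famDist Fv (Z1 E T) := by
        refine le_csInf hZ1ne ?_
        rintro d ⟨z, hz, rfl⟩
        exact_mod_cast key z hz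
      exact_mod_cast this
    by_cases hδ : delta1 T Fv = ∅
    · exfalso
      rcases ((hexp.2 Fv hFvE).1 hδ) with hB | hbig
      · obtain ⟨S, hSz⟩ := hB
        by_cases hS0 : delta0 E S = ∅
        · rw [hS0] at hSz
          exact hFv0 hSz
        · have h1 := hcut S hS0
          rw [← hSz] at h1
          linarith
      · linarith
    · have hbound := (hexp.2 Fv hFvE).2 hδ
      have h1 : ε * (k₁:ℝ) * (Fv.card : ℝ) ≤ ε * (k₁:ℝ) * (famDist Fv (Z1 E T) : ℝ) := by
        apply mul_le_mul_of_nonneg_left hfam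
        positivity
      linarith
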